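/- Assume (H1)–(H5) and let x₀ ∈ 𝕊 satisfy ∇h(x₀)·[f₁,f₂](x₀) < 0. Let r be a drop generator with primitive drop R of period τ₀ such that 𝐒(x₀)(R(t)) ≤ 0 for every t ∈ ℝ (in particular any drop generator works when 𝐒(x₀) is negative semidefinite). Then there exists τ̄ > 0 such that for every τ ∈ (0, τ̄), setting ω := τ₀/τ and letting y be the solution of ẏ(t) = r¹(ωt) f₁(y(t)) + r²(ωt) f₂(y(t)) with y(0) = x₀, one has h(y(t)) − h(x₀) ≤ ½ ∇h(x₀)·[f₁,f₂](x₀) · (1/ω²) · Area(R)|₀^{ωt} for all t ∈ [0, τ]. -/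

import Mathlib

open MeasureTheory Set

noncomputable section

/-- `n`-dimensional Euclidean space. -/
abbrev Euc (n : ℕ) : Type := EuclideanSpace ℝ (Fin n)

/-- The Lie bracket `[f₁, f₂] := Df₂ f₁ − Df₁ f₂`. -/
def lieBracket {n : ℕ} (f₁ f₂ : Euc n → Euc n) (x : Euc n) : Euc n :=
  fderiv ℝ f₂ x (f₁ x) - fderiv ℝ f₁ x (f₂ x)

/-- Entries of the matrix `S(x)`:
`S_{ℓm}(x) = ½ ∇h(x)·(Df_ℓ(x) f_m(x) + Df_m(x) f_ℓ(x)) + f_ℓ(x)·D²h(x) f_m(x)`. -/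
def Smat {n : ℕ} (f₁ f₂ : Euc n → Euc n) (h : Euc n → ℝ) (x : Euc n) (l m : Fin 2) : ℝ :=
  (1 / 2) * fderiv ℝ h x (fderiv ℝ (![f₁, f₂] l) x (![f₁, f₂] m x)
      + fderiv ℝ (![f₁, f₂] m) x (![f₁, f₂] l x))
    + fderiv ℝ (fun y => fderiv ℝ h y (![f₁, f₂] m x)) x (![f₁, f₂] l x)

/-- The quadratic form `𝐒(x)` associated to the symmetric matrix `S(x)`. -/
def Sform {n : ℕ} (f₁ f₂ : Euc n → Euc n) (h : Euc n → ℝ) (x : Euc n) (w : Fin 2 → ℝ) : ℝ :=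
  ∑ l : Fin 2, ∑ m : Fin 2, Smat f₁ f₂ h x l m * w l * w m

/-- The singular set `𝕊 = {x ∈ C : ∇h·f₁ = ∇h·f₂ = 0}`. -/
def singSet {n : ℕ} (f₁ f₂ : Euc n → Euc n) (h : Euc n → ℝ) : Set (Euc n) :=
  {x | h x ≤ 0 ∧ fderiv ℝ h x (f₁ x) = 0 ∧ fderiv ℝ h x (f₂ x) = 0}

/-- Hypothesis (H1): `f₁, f₂` are `C²`, Lipschitz with a common constant, and
`‖f₁ x‖ + ‖f₂ x‖` is uniformly bounded. -/
def H1 {n : ℕ} (f₁ f₂ : Euc n → Euc n) : Prop :=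
  ContDiff ℝ 2 f₁ ∧ ContDiff ℝ 2 f₂ ∧
    (∃ kf : NNReal, LipschitzWith kf f₁ ∧ LipschitzWith kf f₂) ∧
    ∃ k₀ : ℝ, ∀ x, ‖f₁ x‖ + ‖f₂ x‖ ≤ k₀

/-- Hypothesis (H3): `h` is `C^{2,1}`, Lipschitz, `C = {h ≤ 0}` is nonempty and
`∇h ≠ 0` on `{h = 0}`. -/
def H3 {n : ℕ} (h : Euc n → ℝ) : Prop :=
  ContDiff ℝ 2 h ∧ (∃ M : NNReal, LipschitzWith M (iteratedFDeriv ℝ 2 h)) ∧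
    (∃ kh : NNReal, LipschitzWith kh h) ∧ (∃ x, h x ≤ 0) ∧
    ∀ x, h x = 0 → fderiv ℝ h x ≠ 0

/-- Hypothesis (H4): transversality of the Lie bracket on the singular set. -/
def H4 {n : ℕ} (f₁ f₂ : Euc n → Euc n) (h : Euc n → ℝ) : Prop :=
  ∃ α > 0, ∀ x ∈ singSet f₁ f₂ h, α < |fderiv ℝ h x (lieBracket f₁ f₂ x)|

/-- Hypothesis (H5): on the singular set, `𝐒(x)` is negative semidefinite or indefinite. -/
def H5 {n : ℕ} (f₁ f₂ : Euc n → Euc n) (h : Euc n → ℝ) : Prop :=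
  ∀ x ∈ singSet f₁ f₂ h,
    (∀ w : Fin 2 → ℝ, Sform f₁ f₂ h x w ≤ 0) ∨
      ((∃ w : Fin 2 → ℝ, Sform f₁ f₂ h x w < 0) ∧ (∃ w : Fin 2 → ℝ, 0 < Sform f₁ f₂ h x w))

/-- Hypothesis (H6): near the singular set,
`√((∇h·f₁)² + (∇h·f₂)²) ≥ d₀ · dist(x, 𝕊)`. -/
def H6 {n : ℕ} (f₁ f₂ : Euc n → Euc n) (h : Euc n → ℝ) : Prop :=
  ∃ δ > 0, ∃ d₀ > 0, ∀ x : Euc n, Metric.infDist x (singSet f₁ f₂ h) ≤ δ →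
    d₀ * Metric.infDist x (singSet f₁ f₂ h) ≤
      Real.sqrt ((fderiv ℝ h x (f₁ x)) ^ 2 + (fderiv ℝ h x (f₂ x)) ^ 2)

/-- The area swept by the planar curve `R = (R₁, R₂)` on `[a, b]`:
`Area(R)|_a^b = ½ ∫_a^b (R₂' R₁ − R₁' R₂)`. -/
def sweptArea (R₁ R₂ : ℝ → ℝ) (a b : ℝ) : ℝ :=
  (1 / 2) * ∫ s in a..b, (deriv R₂ s * R₁ s - deriv R₁ s * R₂ s)

/-- The excess swept by the planar curve `R = (R₁, R₂)` on `[0, t]`. -/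
def excess (R₁ R₂ : ℝ → ℝ) (t : ℝ) : ℝ :=
  ∑ l : Fin 2, ∑ m : Fin 2,
    ∫ s in (0:ℝ)..t,
      (∫ ξ in (0:ℝ)..s, |ξ * deriv (![R₁, R₂] l) ξ|) * |deriv (![R₁, R₂] m) s|

/-- `R = (R₁, R₂)` is a drop of period `τ₀`: a simple closed `τ₀`-periodic curve through `0`,
parameterized by arc length, with Lipschitz derivative, strictly increasing swept area on
`[0, τ₀]`, and excess controlled by the area. -/
structure IsDrop (R₁ R₂ : ℝ → ℝ) (τ₀ : ℝ) : Prop where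
  pos : 0 < τ₀
  diff₁ : Differentiable ℝ R₁
  diff₂ : Differentiable ℝ R₂
  init₁ : R₁ 0 = 0
  init₂ : R₂ 0 = 0
  unit : ∀ t, (deriv R₁ t) ^ 2 + (deriv R₂ t) ^ 2 = 1
  per₁ : Function.Periodic R₁ τ₀
  per₂ : Function.Periodic R₂ τ₀
  simple : Set.InjOn (fun t => (R₁ t, R₂ t)) (Set.Ico 0 τ₀)
  lip : ∃ L : NNReal, LipschitzWith L (deriv R₁) ∧ LipschitzWith L (deriv R₂)
  area_mono : StrictMonoOn (fun σ => sweptArea R₁ R₂ 0 σ) (Set.Icc 0 τ₀)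
  exc_le : ∃ C > 0, ∀ σ ∈ Set.Icc (0:ℝ) τ₀, excess R₁ R₂ σ ≤ C * |sweptArea R₁ R₂ 0 σ|

/-! ### Auxiliary lemmas -/

lemma taylor_quad {E F : Type*} [NormedAddCommGroup E] [NormedSpace ℝ E]
    [NormedAddCommGroup F] [NormedSpace ℝ F]
    {f : E → F} {f' : E → E →L[ℝ] F} {x₀ : E} {ρ K : ℝ} (hK : 0 ≤ K)
    (hd : ∀ x ∈ Metric.closedBall x₀ ρ, HasFDerivAt f (f' x) x)
    (hlip : ∀ x ∈ Metric.closedBall x₀ ρ, ‖f' x - f' x₀‖ ≤ K * ‖x - x₀‖)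
    {y : E} (hy : y ∈ Metric.closedBall x₀ ρ) :
    ‖f y - f x₀ - f' x₀ (y - x₀)‖ ≤ K * ‖y - x₀‖ ^ 2 := by
  have hyρ : ‖y - x₀‖ ≤ ρ := by
    rw [Metric.mem_closedBall, dist_eq_norm] at hy; exact hy
  have hsub : Metric.closedBall x₀ ‖y - x₀‖ ⊆ Metric.closedBall x₀ ρ :=
    Metric.closedBall_subset_closedBall hyρ
  have key := Convex.norm_image_sub_le_of_norm_hasFDerivWithin_le'
    (f := f) (f' := f') (φ := f' x₀) (C := K * ‖y - x₀‖)
    (s := Metric.closedBall x₀ ‖y - x₀‖)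
    (fun x hx => (hd x (hsub hx)).hasFDerivWithinAt)
    (fun x hx => by
      refine le_trans (hlip x (hsub hx)) ?_
      have : ‖x - x₀‖ ≤ ‖y - x₀‖ := by
        rw [Metric.mem_closedBall, dist_eq_norm] at hx; exact hx
      exact mul_le_mul_of_nonneg_left this hK)
    (convex_closedBall _ _)
    (Metric.mem_closedBall_self (norm_nonneg _))
    (by rw [Metric.mem_closedBall, dist_eq_norm])
  calc ‖f y - f x₀ - f' x₀ (y - x₀)‖ ≤ K * ‖y - x₀‖ * ‖y - x₀‖ := key
    _ = K * ‖y - x₀‖ ^ 2 := by ring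

lemma sweptArea_zero (R₁ R₂ : ℝ → ℝ) : sweptArea R₁ R₂ 0 0 = 0 := by
  simp [sweptArea]

lemma IsDrop.area_nonneg {R₁ R₂ : ℝ → ℝ} {τ₀ : ℝ} (hd : IsDrop R₁ R₂ τ₀)
    {σ : ℝ} (hσ : σ ∈ Set.Icc (0:ℝ) τ₀) : 0 ≤ sweptArea R₁ R₂ 0 σ := by
  rcases eq_or_lt_of_le hσ.1 with h0 | h0
  · rw [← h0, sweptArea_zero]
  · have h := hd.area_mono (Set.left_mem_Icc.2 hd.pos.le) hσ h0
    simpa [sweptArea_zero] using h.le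

lemma IsDrop.cube_le_area {R₁ R₂ : ℝ → ℝ} {τ₀ : ℝ} (hd : IsDrop R₁ R₂ τ₀)
    {C : ℝ}
    (hexc : ∀ σ ∈ Set.Icc (0:ℝ) τ₀, excess R₁ R₂ σ ≤ C * |sweptArea R₁ R₂ 0 σ|)
    {σ : ℝ} (hσ : σ ∈ Set.Icc (0:ℝ) τ₀) : σ ^ 3 / 6 ≤ C * sweptArea R₁ R₂ 0 σ := by
  obtain ⟨L, hL₁, hL₂⟩ := hd.lip
  have hc₁ : Continuous (deriv R₁) := hL₁.continuous
  have hc₂ : Continuous (deriv R₂) := hL₂.continuous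
  set r₁ := deriv R₁
  set r₂ := deriv R₂
  have hrsum : ∀ s, 1 ≤ |r₁ s| + |r₂ s| := by
    intro s
    nlinarith [hd.unit s, abs_nonneg (r₁ s), abs_nonneg (r₂ s), sq_abs (r₁ s), sq_abs (r₂ s),
      abs_mul_abs_self (r₁ s), abs_mul_abs_self (r₂ s)]
  set G₁ : ℝ → ℝ := fun s => ∫ ξ in (0:ℝ)..s, |ξ * r₁ ξ| with hG₁
  set G₂ : ℝ → ℝ := fun s => ∫ ξ in (0:ℝ)..s, |ξ * r₂ ξ| with hG₂
  have hcont₁ : Continuous fun ξ => |ξ * r₁ ξ| := (continuous_id.mul hc₁).abs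
  have hcont₂ : Continuous fun ξ => |ξ * r₂ ξ| := (continuous_id.mul hc₂).abs
  have hGc₁ : Continuous G₁ :=
    intervalIntegral.continuous_primitive (fun a b => hcont₁.intervalIntegrable a b) 0
  have hGc₂ : Continuous G₂ :=
    intervalIntegral.continuous_primitive (fun a b => hcont₂.intervalIntegrable a b) 0
  have hexc_eq : excess R₁ R₂ σ
      = ∫ s in (0:ℝ)..σ, ((G₁ s + G₂ s) * (|r₁ s| + |r₂ s|)) := by
    have e11 : IntervalIntegrable (fun s => G₁ s * |r₁ s|) volume 0 σ :=
      (hGc₁.mul hc₁.abs).intervalIntegrable 0 σ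
    have e12 : IntervalIntegrable (fun s => G₁ s * |r₂ s|) volume 0 σ :=
      (hGc₁.mul hc₂.abs).intervalIntegrable 0 σ
    have e21 : IntervalIntegrable (fun s => G₂ s * |r₁ s|) volume 0 σ :=
      (hGc₂.mul hc₁.abs).intervalIntegrable 0 σ
    have e22 : IntervalIntegrable (fun s => G₂ s * |r₂ s|) volume 0 σ :=
      (hGc₂.mul hc₂.abs).intervalIntegrable 0 σ
    rw [excess]
    simp only [Fin.sum_univ_two, Matrix.cons_val_zero, Matrix.cons_val_one, Matrix.head_cons]
    rw [← intervalIntegral.integral_add e11 e12, ← intervalIntegral.integral_add e21 e22,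
      ← intervalIntegral.integral_add ((e11.add e12)) ((e21.add e22))]
    congr 1
    funext s
    ring
  have hptwise : ∀ s ∈ Set.Icc (0:ℝ) σ, s ^ 2 / 2 ≤ (G₁ s + G₂ s) * (|r₁ s| + |r₂ s|) := by
    intro s hs
    have hGsum : s ^ 2 / 2 ≤ G₁ s + G₂ s := by
      have heq : G₁ s + G₂ s = ∫ ξ in (0:ℝ)..s, (|ξ * r₁ ξ| + |ξ * r₂ ξ|) := by
        rw [hG₁, hG₂, intervalIntegral.integral_add (hcont₁.intervalIntegrable 0 s)
          (hcont₂.intervalIntegrable 0 s)]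
      rw [heq]
      have hid : (∫ ξ in (0:ℝ)..s, ξ) = s ^ 2 / 2 := by
        rw [integral_id]; ring
      rw [← hid]
      apply intervalIntegral.integral_mono_on hs.1
        (Continuous.intervalIntegrable continuous_id 0 s)
        ((hcont₁.add hcont₂).intervalIntegrable 0 s)
      intro ξ hξ
      have hmm : ξ * 1 ≤ |ξ| * (|r₁ ξ| + |r₂ ξ|) := by
        apply mul_le_mul (le_abs_self ξ) (hrsum ξ) zero_le_one (abs_nonneg ξ)
      show id ξ ≤ |ξ * r₁ ξ| + |ξ * r₂ ξ|
      rw [abs_mul, abs_mul]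
      simp only [id_eq]
      nlinarith [hmm]
    have hGnn : 0 ≤ G₁ s + G₂ s := le_trans (by positivity) hGsum
    calc s ^ 2 / 2 ≤ G₁ s + G₂ s := hGsum
      _ = (G₁ s + G₂ s) * 1 := (mul_one _).symm
      _ ≤ (G₁ s + G₂ s) * (|r₁ s| + |r₂ s|) := by
          exact mul_le_mul_of_nonneg_left (hrsum s) hGnn
  have hcube : σ ^ 3 / 6 ≤ excess R₁ R₂ σ := by
    rw [hexc_eq]
    have hval : (∫ s in (0:ℝ)..σ, s ^ 2 / 2) = σ ^ 3 / 6 := by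
      rw [intervalIntegral.integral_div, integral_pow]; ring
    rw [← hval]
    apply intervalIntegral.integral_mono_on hσ.1
      ((continuous_pow 2).div_const 2 |>.intervalIntegrable 0 σ)
      (((hGc₁.add hGc₂).mul (hc₁.abs.add hc₂.abs)).intervalIntegrable 0 σ)
    exact hptwise
  calc σ ^ 3 / 6 ≤ excess R₁ R₂ σ := hcube
    _ ≤ C * |sweptArea R₁ R₂ 0 σ| := hexc σ hσ
    _ = C * sweptArea R₁ R₂ 0 σ := by rw [abs_of_nonneg (hd.area_nonneg hσ)]


set_option maxHeartbeats 1000000 in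
/-- **Proposition (estimate of `h` along a spiraling trajectory at a singular point).**
Assume (H1)–(H5), let `x₀ ∈ 𝕊` with `∇h(x₀)·[f₁,f₂](x₀) < 0`, and let `r = R'` be a drop
generator of period `τ₀` with `𝐒(x₀)(R(t)) ≤ 0` for all `t`. Then there is `τ̄ > 0` such
that for all `τ ∈ (0, τ̄)`, with `ω = τ₀/τ`, the solution `y` of
`ẏ = r¹(ωt) f₁(y) + r²(ωt) f₂(y)`, `y(0) = x₀`, satisfies
`h(y(t)) − h(x₀) ≤ ½ ∇h(x₀)·[f₁,f₂](x₀) · ω⁻² · Area(R)|₀^{ωt}` on `[0, τ]`. -/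
theorem spiral_estimate_at_singular_point {n : ℕ}
    (f₁ f₂ : Euc n → Euc n) (h : Euc n → ℝ)
    (h1 : H1 f₁ f₂) (h3 : H3 h) (h4 : H4 f₁ f₂ h) (h5 : H5 f₁ f₂ h)
    (x₀ : Euc n) (hx₀ : x₀ ∈ singSet f₁ f₂ h)
    (hbr : fderiv ℝ h x₀ (lieBracket f₁ f₂ x₀) < 0)
    (R₁ R₂ : ℝ → ℝ) (τ₀ : ℝ) (hdrop : IsDrop R₁ R₂ τ₀)
    (hS : ∀ t : ℝ, Sform f₁ f₂ h x₀ ![R₁ t, R₂ t] ≤ 0) :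
    ∃ τbar > 0, ∀ τ ∈ Set.Ioo (0:ℝ) τbar,
      ∀ y : ℝ → Euc n, y 0 = x₀ →
        (∀ t ∈ Set.Icc 0 τ,
          HasDerivAt y
            (deriv R₁ ((τ₀ / τ) * t) • f₁ (y t)
              + deriv R₂ ((τ₀ / τ) * t) • f₂ (y t)) t) →
        ∀ t ∈ Set.Icc 0 τ,
          h (y t) - h x₀ ≤
            (1 / 2) * fderiv ℝ h x₀ (lieBracket f₁ f₂ x₀) * (1 / (τ₀ / τ) ^ 2) *
              sweptArea R₁ R₂ 0 ((τ₀ / τ) * t) := by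
  obtain ⟨hf₁, hf₂, ⟨kf, hkf₁, hkf₂⟩, k₀, hk₀⟩ := h1
  obtain ⟨hh, ⟨M, hM⟩, -, -, -⟩ := h3
  obtain ⟨hxC, hg₁0, hg₂0⟩ := hx₀
  obtain ⟨CR, hCR, hexc⟩ := hdrop.exc_le
  obtain ⟨L, hL₁, hL₂⟩ := hdrop.lip
  have hrc₁ : Continuous (deriv R₁) := hL₁.continuous
  have hrc₂ : Continuous (deriv R₂) := hL₂.continuous
  have hr₁le : ∀ s, |deriv R₁ s| ≤ 1 := by
    intro s
    nlinarith [hdrop.unit s, abs_nonneg (deriv R₁ s), sq_abs (deriv R₁ s),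
      sq_nonneg (|deriv R₁ s| - 1), sq_nonneg (deriv R₂ s)]
  have hr₂le : ∀ s, |deriv R₂ s| ≤ 1 := by
    intro s
    nlinarith [hdrop.unit s, abs_nonneg (deriv R₂ s), sq_abs (deriv R₂ s),
      sq_nonneg (|deriv R₂ s| - 1), sq_nonneg (deriv R₁ s)]
  have hk₀0 : 0 ≤ k₀ := le_trans (by positivity) (hk₀ x₀)
  have hfb₁ : ∀ x, ‖f₁ x‖ ≤ k₀ := fun x => le_trans (le_add_of_nonneg_right (norm_nonneg _)) (hk₀ x)
  have hfb₂ : ∀ x, ‖f₂ x‖ ≤ k₀ := fun x => le_trans (le_add_of_nonneg_left (norm_nonneg _)) (hk₀ x)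
  -- differentiability
  have hhd : Differentiable ℝ h := hh.differentiable two_ne_zero
  have hf₁d : Differentiable ℝ f₁ := hf₁.differentiable two_ne_zero
  have hf₂d : Differentiable ℝ f₂ := hf₂.differentiable two_ne_zero
  have hDh1 : ContDiff ℝ 1 (fderiv ℝ h) := hh.fderiv_right (le_refl 2)
  have hDhd : Differentiable ℝ (fderiv ℝ h) := hDh1.differentiable one_ne_zero
  set p := fderiv ℝ h x₀ with hp
  set B := fderiv ℝ (fderiv ℝ h) x₀ with hBdef
  have hBsymm : ∀ v w, B v w = B w v := fun v w =>
    second_derivative_symmetric (fun z => (hhd z).hasFDerivAt) ((hDhd x₀).hasFDerivAt) v w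
  -- Lipschitz bound for the second derivative of h
  have hMop : ∀ x : Euc n, ‖fderiv ℝ (fderiv ℝ h) x - B‖ ≤ M * ‖x - x₀‖ := by
    intro x
    refine ContinuousLinearMap.opNorm_le_bound _ (by positivity) (fun v => ?_)
    refine ContinuousLinearMap.opNorm_le_bound _ (by positivity) (fun w => ?_)
    have hkey : (fderiv ℝ (fderiv ℝ h) x - B) v w
        = (iteratedFDeriv ℝ 2 h x - iteratedFDeriv ℝ 2 h x₀) ![v, w] := by
      rw [ContinuousMultilinearMap.sub_apply (x := ![v, w]), iteratedFDeriv_two_apply, iteratedFDeriv_two_apply]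
      simp [hBdef]
    rw [hkey]
    have hle := (iteratedFDeriv ℝ 2 h x - iteratedFDeriv ℝ 2 h x₀).le_opNorm ![v, w]
    have hprod : (∏ i, ‖(![v, w] : Fin 2 → Euc n) i‖) = ‖v‖ * ‖w‖ := by
      simp [Fin.prod_univ_two]
    rw [hprod] at hle
    have hnorm : ‖iteratedFDeriv ℝ 2 h x - iteratedFDeriv ℝ 2 h x₀‖ ≤ M * ‖x - x₀‖ := by
      have hd := hM.dist_le_mul x x₀
      rw [dist_eq_norm, dist_eq_norm] at hd
      exact hd
    calc ‖(iteratedFDeriv ℝ 2 h x - iteratedFDeriv ℝ 2 h x₀) ![v, w]‖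
        ≤ ‖iteratedFDeriv ℝ 2 h x - iteratedFDeriv ℝ 2 h x₀‖ * (‖v‖ * ‖w‖) := hle
      _ ≤ (M * ‖x - x₀‖) * (‖v‖ * ‖w‖) := mul_le_mul_of_nonneg_right hnorm (by positivity)
      _ = M * ‖x - x₀‖ * ‖v‖ * ‖w‖ := by ring
  -- local Lipschitz for fderiv f₁, f₂
  have hDf₁c : ContDiff ℝ 1 (fderiv ℝ f₁) := hf₁.fderiv_right (le_refl 2)
  have hDf₂c : ContDiff ℝ 1 (fderiv ℝ f₂) := hf₂.fderiv_right (le_refl 2)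
  obtain ⟨K₁, t₁, ht₁, hlipK₁⟩ := (hDf₁c.contDiffAt (x := x₀)).exists_lipschitzOnWith
  obtain ⟨K₂, t₂, ht₂, hlipK₂⟩ := (hDf₂c.contDiffAt (x := x₀)).exists_lipschitzOnWith
  obtain ⟨δ₁, hδ₁, hball₁⟩ := Metric.mem_nhds_iff.1 ht₁
  obtain ⟨δ₂, hδ₂, hball₂⟩ := Metric.mem_nhds_iff.1 ht₂
  set ε := min (min (δ₁ / 2) (δ₂ / 2)) 1 with hεdef
  have hε : 0 < ε := by
    apply lt_min (lt_min (by linarith) (by linarith)) one_pos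
  have hsub₁ : Metric.closedBall x₀ ε ⊆ t₁ := by
    refine subset_trans ?_ hball₁
    intro z hz
    rw [Metric.mem_closedBall] at hz
    rw [Metric.mem_ball]
    calc dist z x₀ ≤ ε := hz
      _ ≤ δ₁ / 2 := le_trans (min_le_left _ _) (min_le_left _ _)
      _ < δ₁ := by linarith
  have hsub₂ : Metric.closedBall x₀ ε ⊆ t₂ := by
    refine subset_trans ?_ hball₂
    intro z hz
    rw [Metric.mem_closedBall] at hz
    rw [Metric.mem_ball]
    calc dist z x₀ ≤ ε := hz
      _ ≤ δ₂ / 2 := le_trans (min_le_left _ _) (min_le_right _ _)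
      _ < δ₂ := by linarith
  have hx₀t₁ : x₀ ∈ t₁ := mem_of_mem_nhds ht₁
  have hx₀t₂ : x₀ ∈ t₂ := mem_of_mem_nhds ht₂
  -- quadratic Taylor remainders
  have hquadh : ∀ z ∈ Metric.closedBall x₀ ε,
      ‖fderiv ℝ h z - p - B (z - x₀)‖ ≤ M * ‖z - x₀‖ ^ 2 := by
    intro z hz
    exact taylor_quad (f := fderiv ℝ h) (f' := fun x => fderiv ℝ (fderiv ℝ h) x) M.coe_nonneg
      (fun x _ => (hDhd x).hasFDerivAt) (fun x _ => hMop x) hz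
  have hquadf₁ : ∀ z ∈ Metric.closedBall x₀ ε,
      ‖f₁ z - f₁ x₀ - fderiv ℝ f₁ x₀ (z - x₀)‖ ≤ K₁ * ‖z - x₀‖ ^ 2 := by
    intro z hz
    refine taylor_quad K₁.coe_nonneg (fun x _ => (hf₁d x).hasFDerivAt) (fun x hx => ?_) hz
    have hdle := hlipK₁.dist_le_mul x (hsub₁ hx) x₀ hx₀t₁
    rw [dist_eq_norm, dist_eq_norm] at hdle
    exact hdle
  have hquadf₂ : ∀ z ∈ Metric.closedBall x₀ ε,
      ‖f₂ z - f₂ x₀ - fderiv ℝ f₂ x₀ (z - x₀)‖ ≤ K₂ * ‖z - x₀‖ ^ 2 := by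
    intro z hz
    refine taylor_quad K₂.coe_nonneg (fun x _ => (hf₂d x).hasFDerivAt) (fun x hx => ?_) hz
    have hdle := hlipK₂.dist_le_mul x (hsub₂ hx) x₀ hx₀t₂
    rw [dist_eq_norm, dist_eq_norm] at hdle
    exact hdle
  -- the linearized forms
  set A₁ : Euc n →L[ℝ] ℝ := B.flip (f₁ x₀) + p.comp (fderiv ℝ f₁ x₀) with hA₁def
  set A₂ : Euc n →L[ℝ] ℝ := B.flip (f₂ x₀) + p.comp (fderiv ℝ f₂ x₀) with hA₂def
  have hA₁app : ∀ v, A₁ v = B v (f₁ x₀) + p (fderiv ℝ f₁ x₀ v) := fun v => by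
    simp [hA₁def]
  have hA₂app : ∀ v, A₂ v = B v (f₂ x₀) + p (fderiv ℝ f₂ x₀ v) := fun v => by
    simp [hA₂def]
  set Kg : ℝ := M * k₀ + ‖B‖ * kf + ‖p‖ * (K₁ + K₂) with hKgdef
  have hKg0 : 0 ≤ Kg := by positivity
  -- quadratic remainder for g_i(z) = ∇h(z)·f_i(z)
  have hgquad₁ : ∀ z ∈ Metric.closedBall x₀ ε,
      |fderiv ℝ h z (f₁ z) - A₁ (z - x₀)| ≤ Kg * ‖z - x₀‖ ^ 2 := by
    intro z hz
    have hsplit : fderiv ℝ h z (f₁ z) - A₁ (z - x₀)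
        = (fderiv ℝ h z - p - B (z - x₀)) (f₁ z)
          + (B (z - x₀)) (f₁ z - f₁ x₀)
          + p (f₁ z - f₁ x₀ - fderiv ℝ f₁ x₀ (z - x₀)) := by
      simp only [ContinuousLinearMap.sub_apply, map_sub, hA₁app]
      have hp0 : p (f₁ x₀) = 0 := hg₁0
      linarith [hp0]
    have hb1 : |(fderiv ℝ h z - p - B (z - x₀)) (f₁ z)| ≤ M * ‖z - x₀‖ ^ 2 * k₀ := by
      rw [← Real.norm_eq_abs]
      calc ‖(fderiv ℝ h z - p - B (z - x₀)) (f₁ z)‖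
          ≤ ‖fderiv ℝ h z - p - B (z - x₀)‖ * ‖f₁ z‖ := ContinuousLinearMap.le_opNorm _ _
        _ ≤ (M * ‖z - x₀‖ ^ 2) * k₀ :=
            mul_le_mul (hquadh z hz) (hfb₁ z) (norm_nonneg _) (by positivity)
    have hb2 : |(B (z - x₀)) (f₁ z - f₁ x₀)| ≤ ‖B‖ * kf * ‖z - x₀‖ ^ 2 := by
      rw [← Real.norm_eq_abs]
      have hlz : ‖f₁ z - f₁ x₀‖ ≤ kf * ‖z - x₀‖ := by
        have hdle := hkf₁.dist_le_mul z x₀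
        rw [dist_eq_norm, dist_eq_norm] at hdle
        exact hdle
      calc ‖(B (z - x₀)) (f₁ z - f₁ x₀)‖
          ≤ ‖B (z - x₀)‖ * ‖f₁ z - f₁ x₀‖ := ContinuousLinearMap.le_opNorm _ _
        _ ≤ (‖B‖ * ‖z - x₀‖) * (kf * ‖z - x₀‖) :=
            mul_le_mul (ContinuousLinearMap.le_opNorm _ _) hlz (norm_nonneg _) (by positivity)
        _ = ‖B‖ * kf * ‖z - x₀‖ ^ 2 := by ring
    have hb3 : |p (f₁ z - f₁ x₀ - fderiv ℝ f₁ x₀ (z - x₀))| ≤ ‖p‖ * (K₁ * ‖z - x₀‖ ^ 2) := by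
      rw [← Real.norm_eq_abs]
      calc ‖p (f₁ z - f₁ x₀ - fderiv ℝ f₁ x₀ (z - x₀))‖
          ≤ ‖p‖ * ‖f₁ z - f₁ x₀ - fderiv ℝ f₁ x₀ (z - x₀)‖ := ContinuousLinearMap.le_opNorm _ _
        _ ≤ ‖p‖ * (K₁ * ‖z - x₀‖ ^ 2) :=
            mul_le_mul_of_nonneg_left (hquadf₁ z hz) (norm_nonneg _)
    rw [hsplit]
    have habs := abs_add_le ((fderiv ℝ h z - p - B (z - x₀)) (f₁ z) + (B (z - x₀)) (f₁ z - f₁ x₀))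
      (p (f₁ z - f₁ x₀ - fderiv ℝ f₁ x₀ (z - x₀)))
    have habs2 := abs_add_le ((fderiv ℝ h z - p - B (z - x₀)) (f₁ z)) ((B (z - x₀)) (f₁ z - f₁ x₀))
    have hK₁K₂ : (K₁ : ℝ) ≤ K₁ + K₂ := by
      have : (0:ℝ) ≤ K₂ := K₂.coe_nonneg
      linarith
    have hKgexp : M * ‖z - x₀‖ ^ 2 * k₀ + ‖B‖ * kf * ‖z - x₀‖ ^ 2 + ‖p‖ * (K₁ * ‖z - x₀‖ ^ 2)
        ≤ Kg * ‖z - x₀‖ ^ 2 := by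
      have h2 : (0:ℝ) ≤ ‖p‖ * K₂ * ‖z - x₀‖ ^ 2 := by positivity
      have hexpand : Kg * ‖z - x₀‖ ^ 2 = M * ‖z - x₀‖ ^ 2 * k₀ + ‖B‖ * kf * ‖z - x₀‖ ^ 2
          + ‖p‖ * (K₁ * ‖z - x₀‖ ^ 2) + ‖p‖ * K₂ * ‖z - x₀‖ ^ 2 := by
        rw [hKgdef]; ring
      linarith
    linarith
  have hgquad₂ : ∀ z ∈ Metric.closedBall x₀ ε,
      |fderiv ℝ h z (f₂ z) - A₂ (z - x₀)| ≤ Kg * ‖z - x₀‖ ^ 2 := by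
    intro z hz
    have hsplit : fderiv ℝ h z (f₂ z) - A₂ (z - x₀)
        = (fderiv ℝ h z - p - B (z - x₀)) (f₂ z)
          + (B (z - x₀)) (f₂ z - f₂ x₀)
          + p (f₂ z - f₂ x₀ - fderiv ℝ f₂ x₀ (z - x₀)) := by
      simp only [ContinuousLinearMap.sub_apply, map_sub, hA₂app]
      have hp0 : p (f₂ x₀) = 0 := hg₂0
      linarith [hp0]
    have hb1 : |(fderiv ℝ h z - p - B (z - x₀)) (f₂ z)| ≤ M * ‖z - x₀‖ ^ 2 * k₀ := by
      rw [← Real.norm_eq_abs]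
      calc ‖(fderiv ℝ h z - p - B (z - x₀)) (f₂ z)‖
          ≤ ‖fderiv ℝ h z - p - B (z - x₀)‖ * ‖f₂ z‖ := ContinuousLinearMap.le_opNorm _ _
        _ ≤ (M * ‖z - x₀‖ ^ 2) * k₀ :=
            mul_le_mul (hquadh z hz) (hfb₂ z) (norm_nonneg _) (by positivity)
    have hb2 : |(B (z - x₀)) (f₂ z - f₂ x₀)| ≤ ‖B‖ * kf * ‖z - x₀‖ ^ 2 := by
      rw [← Real.norm_eq_abs]
      have hlz : ‖f₂ z - f₂ x₀‖ ≤ kf * ‖z - x₀‖ := by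
        have hdle := hkf₂.dist_le_mul z x₀
        rw [dist_eq_norm, dist_eq_norm] at hdle
        exact hdle
      calc ‖(B (z - x₀)) (f₂ z - f₂ x₀)‖
          ≤ ‖B (z - x₀)‖ * ‖f₂ z - f₂ x₀‖ := ContinuousLinearMap.le_opNorm _ _
        _ ≤ (‖B‖ * ‖z - x₀‖) * (kf * ‖z - x₀‖) :=
            mul_le_mul (ContinuousLinearMap.le_opNorm _ _) hlz (norm_nonneg _) (by positivity)
        _ = ‖B‖ * kf * ‖z - x₀‖ ^ 2 := by ring
    have hb3 : |p (f₂ z - f₂ x₀ - fderiv ℝ f₂ x₀ (z - x₀))| ≤ ‖p‖ * (K₂ * ‖z - x₀‖ ^ 2) := by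
      rw [← Real.norm_eq_abs]
      calc ‖p (f₂ z - f₂ x₀ - fderiv ℝ f₂ x₀ (z - x₀))‖
          ≤ ‖p‖ * ‖f₂ z - f₂ x₀ - fderiv ℝ f₂ x₀ (z - x₀)‖ := ContinuousLinearMap.le_opNorm _ _
        _ ≤ ‖p‖ * (K₂ * ‖z - x₀‖ ^ 2) :=
            mul_le_mul_of_nonneg_left (hquadf₂ z hz) (norm_nonneg _)
    rw [hsplit]
    have habs := abs_add_le ((fderiv ℝ h z - p - B (z - x₀)) (f₂ z) + (B (z - x₀)) (f₂ z - f₂ x₀))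
      (p (f₂ z - f₂ x₀ - fderiv ℝ f₂ x₀ (z - x₀)))
    have habs2 := abs_add_le ((fderiv ℝ h z - p - B (z - x₀)) (f₂ z)) ((B (z - x₀)) (f₂ z - f₂ x₀))
    have hK₁K₂ : (K₂ : ℝ) ≤ K₁ + K₂ := by
      have : (0:ℝ) ≤ K₁ := K₁.coe_nonneg
      linarith
    have hKgexp : M * ‖z - x₀‖ ^ 2 * k₀ + ‖B‖ * kf * ‖z - x₀‖ ^ 2 + ‖p‖ * (K₂ * ‖z - x₀‖ ^ 2)
        ≤ Kg * ‖z - x₀‖ ^ 2 := by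
      have h2 : (0:ℝ) ≤ ‖p‖ * K₁ * ‖z - x₀‖ ^ 2 := by positivity
      have hexpand : Kg * ‖z - x₀‖ ^ 2 = M * ‖z - x₀‖ ^ 2 * k₀ + ‖B‖ * kf * ‖z - x₀‖ ^ 2
          + ‖p‖ * (K₂ * ‖z - x₀‖ ^ 2) + ‖p‖ * K₁ * ‖z - x₀‖ ^ 2 := by
        rw [hKgdef]; ring
      linarith
    linarith
  -- matrix entries
  set a11 := A₁ (f₁ x₀) with ha11
  set a12 := A₁ (f₂ x₀) with ha12
  set a21 := A₂ (f₁ x₀) with ha21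
  set a22 := A₂ (f₂ x₀) with ha22
  have hfderiv_apply : ∀ c v : Euc n,
      fderiv ℝ (fun z => fderiv ℝ h z c) x₀ v = B v c := by
    intro c v
    have h1 : HasFDerivAt (fderiv ℝ h) (fderiv ℝ (fderiv ℝ h) x₀) x₀ := (hDhd x₀).hasFDerivAt
    have h2 : HasFDerivAt (fun _ : Euc n => c) (0 : Euc n →L[ℝ] Euc n) x₀ :=
      hasFDerivAt_const c x₀
    have hcomb := h1.clm_apply h2
    have hd : HasFDerivAt (fun z => fderiv ℝ h z c)
        ((fderiv ℝ (fderiv ℝ h) x₀).flip c) x₀ := by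
      simpa using hcomb
    rw [hd.fderiv]
    simp [hBdef]
  have hSmat00 : Smat f₁ f₂ h x₀ 0 0 = a11 := by
    simp only [Smat, Matrix.cons_val_zero, hfderiv_apply, map_add]
    rw [ha11, hA₁app]
    ring
  have hSmat11 : Smat f₁ f₂ h x₀ 1 1 = a22 := by
    simp only [Smat, Matrix.cons_val_one, Matrix.cons_val_zero, Matrix.head_cons, hfderiv_apply, map_add]
    rw [ha22, hA₂app]
    ring
  have hSmat01 : Smat f₁ f₂ h x₀ 0 1 = (a12 + a21) / 2 := by
    simp only [Smat, Matrix.cons_val_zero, Matrix.cons_val_one, Matrix.head_cons,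
      hfderiv_apply, map_add]
    rw [ha12, ha21, hA₁app, hA₂app, hBsymm (f₂ x₀) (f₁ x₀)]
    ring
  have hSmat10 : Smat f₁ f₂ h x₀ 1 0 = (a12 + a21) / 2 := by
    simp only [Smat, Matrix.cons_val_zero, Matrix.cons_val_one, Matrix.head_cons,
      hfderiv_apply, map_add]
    rw [ha12, ha21, hA₁app, hA₂app, hBsymm (f₂ x₀) (f₁ x₀)]
    ring
  have hGform : ∀ σ, Sform f₁ f₂ h x₀ ![R₁ σ, R₂ σ]
      = a11 * (R₁ σ * R₁ σ) + (a12 + a21) * (R₁ σ * R₂ σ) + a22 * (R₂ σ * R₂ σ) := by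
    intro σ
    simp only [Sform, Fin.sum_univ_two, Matrix.cons_val_zero, Matrix.cons_val_one,
      Matrix.head_cons, hSmat00, hSmat01, hSmat10, hSmat11]
    ring
  have hbeta : a21 - a12 = p (lieBracket f₁ f₂ x₀) := by
    rw [ha21, ha12, hA₂app, hA₁app, lieBracket, map_sub, hBsymm (f₂ x₀) (f₁ x₀)]
    ring
  have hβneg : p (lieBracket f₁ f₂ x₀) < 0 := hbr
  -- error constant and the choice of τbar
  set KA : ℝ := ‖A₁‖ + ‖A₂‖ with hKAdef
  set Kerr : ℝ := 2 * Kg * k₀ ^ 2 + KA * kf * k₀ with hKerrdef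
  have hKerr0 : 0 ≤ Kerr := by positivity
  refine ⟨min (ε / (k₀ + 1)) ((-p (lieBracket f₁ f₂ x₀)) * τ₀ / (4 * CR * (Kerr + 1))),
    lt_min (by positivity) (div_pos (mul_pos (neg_pos.2 hβneg) hdrop.pos) (by positivity)), ?_⟩
  intro τ hτ y hy0 hyd t ht
  obtain ⟨hτ0, hτbar⟩ := hτ
  have hτk₀ : k₀ * τ ≤ ε := by
    have h1 : τ < ε / (k₀ + 1) := lt_of_lt_of_le hτbar (min_le_left _ _)
    have h2 : τ * (k₀ + 1) < ε := by
      rw [← lt_div_iff₀ (by positivity)]; exact h1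
    have h3 : τ * (k₀ + 1) = k₀ * τ + τ := by ring
    linarith
  have hτK : Kerr * τ * (4 * CR) ≤ (-p (lieBracket f₁ f₂ x₀)) * τ₀ := by
    have h1 : τ < (-p (lieBracket f₁ f₂ x₀)) * τ₀ / (4 * CR * (Kerr + 1)) :=
      lt_of_lt_of_le hτbar (min_le_right _ _)
    have h2 : τ * (4 * CR * (Kerr + 1)) < (-p (lieBracket f₁ f₂ x₀)) * τ₀ := by
      rw [← lt_div_iff₀ (by positivity)]; exact h1
    have h3 : (0:ℝ) ≤ τ * (4 * CR) := by positivity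
    have h4 : τ * (4 * CR * (Kerr + 1)) = Kerr * τ * (4 * CR) + τ * (4 * CR) := by ring
    linarith
  set ω := τ₀ / τ with hωdef
  have hω : 0 < ω := div_pos hdrop.pos hτ0
  have hωτ : ω * τ = τ₀ := by
    rw [hωdef]; field_simp
  have hycont : ContinuousOn y (Set.Icc 0 τ) := fun s hs =>
    ((hyd s hs).continuousAt).continuousWithinAt
  have hybound : ∀ s ∈ Set.Icc (0:ℝ) τ, ‖y s - x₀‖ ≤ k₀ * s := by
    intro s hs
    have key := Convex.norm_image_sub_le_of_norm_hasDerivWithin_le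
      (f := y) (f' := fun u => deriv R₁ (ω * u) • f₁ (y u) + deriv R₂ (ω * u) • f₂ (y u))
      (C := k₀) (s := Set.Icc 0 τ)
      (fun u hu => (hyd u hu).hasDerivWithinAt)
      (fun u hu => by
        calc ‖deriv R₁ (ω * u) • f₁ (y u) + deriv R₂ (ω * u) • f₂ (y u)‖
            ≤ ‖deriv R₁ (ω * u) • f₁ (y u)‖ + ‖deriv R₂ (ω * u) • f₂ (y u)‖ := norm_add_le _ _
          _ = |deriv R₁ (ω * u)| * ‖f₁ (y u)‖ + |deriv R₂ (ω * u)| * ‖f₂ (y u)‖ := by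
              rw [norm_smul, norm_smul, Real.norm_eq_abs, Real.norm_eq_abs]
          _ ≤ 1 * ‖f₁ (y u)‖ + 1 * ‖f₂ (y u)‖ :=
              add_le_add (mul_le_mul_of_nonneg_right (hr₁le _) (norm_nonneg _))
                (mul_le_mul_of_nonneg_right (hr₂le _) (norm_nonneg _))
          _ = ‖f₁ (y u)‖ + ‖f₂ (y u)‖ := by ring
          _ ≤ k₀ := hk₀ _)
      (convex_Icc _ _) (Set.left_mem_Icc.2 hτ0.le) hs
    rw [hy0] at key
    calc ‖y s - x₀‖ ≤ k₀ * ‖s - 0‖ := key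
      _ = k₀ * s := by rw [sub_zero, Real.norm_eq_abs, abs_of_nonneg hs.1]
  have hymem : ∀ s ∈ Set.Icc (0:ℝ) τ, y s ∈ Metric.closedBall x₀ ε := by
    intro s hs
    rw [Metric.mem_closedBall, dist_eq_norm]
    calc ‖y s - x₀‖ ≤ k₀ * s := hybound s hs
      _ ≤ k₀ * τ := mul_le_mul_of_nonneg_left hs.2 hk₀0
      _ ≤ ε := hτk₀
  -- the comparison curve
  set Ψ : ℝ → Euc n :=
    fun s => y s - x₀ - ((ω⁻¹ * R₁ (ω * s)) • f₁ x₀ + (ω⁻¹ * R₂ (ω * s)) • f₂ x₀) with hΨdef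
  set D : ℝ → Euc n := fun u => deriv R₁ (ω * u) • (f₁ (y u) - f₁ x₀)
    + deriv R₂ (ω * u) • (f₂ (y u) - f₂ x₀) with hDdef
  have hΨder : ∀ s ∈ Set.Icc (0:ℝ) τ, HasDerivAt Ψ (D s) s := by
    intro s hs
    have h0 : HasDerivAt (fun u : ℝ => ω * u) ω s := by
      simpa using (hasDerivAt_id s).const_mul ω
    have hR₁ : HasDerivAt (fun u => ω⁻¹ * R₁ (ω * u)) (deriv R₁ (ω * s)) s := by
      have h1 : HasDerivAt R₁ (deriv R₁ (ω * s)) (ω * s) := (hdrop.diff₁ (ω * s)).hasDerivAt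
      have h2 := (h1.comp s h0).const_mul ω⁻¹
      have h3 : ω⁻¹ * (deriv R₁ (ω * s) * ω) = deriv R₁ (ω * s) := by field_simp
      rwa [h3] at h2
    have hR₂ : HasDerivAt (fun u => ω⁻¹ * R₂ (ω * u)) (deriv R₂ (ω * s)) s := by
      have h1 : HasDerivAt R₂ (deriv R₂ (ω * s)) (ω * s) := (hdrop.diff₂ (ω * s)).hasDerivAt
      have h2 := (h1.comp s h0).const_mul ω⁻¹
      have h3 : ω⁻¹ * (deriv R₂ (ω * s) * ω) = deriv R₂ (ω * s) := by field_simp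
      rwa [h3] at h2
    have hy' := hyd s hs
    have hcomb := (hy'.sub_const x₀).sub
      ((hR₁.smul_const (f₁ x₀)).add (hR₂.smul_const (f₂ x₀)))
    convert hcomb using 1
    show deriv R₁ (ω * s) • (f₁ (y s) - f₁ x₀) + deriv R₂ (ω * s) • (f₂ (y s) - f₂ x₀) = _
    simp only [hDdef, smul_sub]
    abel
    all_goals rfl
  have hΨbound : ∀ s ∈ Set.Icc (0:ℝ) τ, ‖Ψ s‖ ≤ kf * k₀ * s ^ 2 := by
    intro s hs
    have h0s : 0 ≤ s := hs.1
    have hsτ : Set.Icc (0:ℝ) s ⊆ Set.Icc (0:ℝ) τ := Set.Icc_subset_Icc le_rfl hs.2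
    have huIcc : Set.uIcc (0:ℝ) s = Set.Icc 0 s := Set.uIcc_of_le h0s
    have hy' : ContinuousOn y (Set.Icc 0 s) := hycont.mono hsτ
    have hDcont : ContinuousOn D (Set.Icc 0 s) :=
      (((hrc₁.comp (continuous_const.mul continuous_id)).continuousOn).smul
        ((hf₁.continuous.comp_continuousOn hy').sub continuousOn_const)).add
        (((hrc₂.comp (continuous_const.mul continuous_id)).continuousOn).smul
        ((hf₂.continuous.comp_continuousOn hy').sub continuousOn_const))
    have hFTC : ∫ u in (0:ℝ)..s, D u = Ψ s - Ψ 0 :=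
      intervalIntegral.integral_eq_sub_of_hasDerivAt
        (fun u hu => hΨder u (hsτ (huIcc ▸ hu)))
        ((huIcc ▸ hDcont).intervalIntegrable)
    have hΨ0 : Ψ 0 = 0 := by
      simp [hΨdef, hy0, hdrop.init₁, hdrop.init₂]
    have hnormle : ‖∫ u in (0:ℝ)..s, D u‖ ≤ |∫ u in (0:ℝ)..s, 2 * kf * k₀ * u| := by
      apply intervalIntegral.norm_integral_le_abs_of_norm_le
      · filter_upwards [ae_restrict_mem measurableSet_uIoc] with u hu
        rw [Set.uIoc_of_le h0s] at hu
        have huτ : u ∈ Set.Icc (0:ℝ) τ := ⟨hu.1.le, le_trans hu.2 hs.2⟩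
        have hyb := hybound u huτ
        have hl₁ : ‖f₁ (y u) - f₁ x₀‖ ≤ kf * (k₀ * u) := by
          have hdle := hkf₁.dist_le_mul (y u) x₀
          rw [dist_eq_norm, dist_eq_norm] at hdle
          exact le_trans hdle (mul_le_mul_of_nonneg_left hyb kf.coe_nonneg)
        have hl₂ : ‖f₂ (y u) - f₂ x₀‖ ≤ kf * (k₀ * u) := by
          have hdle := hkf₂.dist_le_mul (y u) x₀
          rw [dist_eq_norm, dist_eq_norm] at hdle
          exact le_trans hdle (mul_le_mul_of_nonneg_left hyb kf.coe_nonneg)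
        calc ‖D u‖ ≤ ‖deriv R₁ (ω * u) • (f₁ (y u) - f₁ x₀)‖
              + ‖deriv R₂ (ω * u) • (f₂ (y u) - f₂ x₀)‖ := norm_add_le _ _
          _ = |deriv R₁ (ω * u)| * ‖f₁ (y u) - f₁ x₀‖
              + |deriv R₂ (ω * u)| * ‖f₂ (y u) - f₂ x₀‖ := by
              rw [norm_smul, norm_smul, Real.norm_eq_abs, Real.norm_eq_abs]
          _ ≤ 1 * (kf * (k₀ * u)) + 1 * (kf * (k₀ * u)) := by
              refine add_le_add (mul_le_mul (hr₁le _) hl₁ (norm_nonneg _) zero_le_one)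
                (mul_le_mul (hr₂le _) hl₂ (norm_nonneg _) zero_le_one)
          _ = 2 * kf * k₀ * u := by ring
      · exact Continuous.intervalIntegrable (by fun_prop) 0 s
    have hval : (∫ u in (0:ℝ)..s, 2 * (kf:ℝ) * k₀ * u) = kf * k₀ * s ^ 2 := by
      have : (∫ u in (0:ℝ)..s, 2 * (kf:ℝ) * k₀ * u)
          = 2 * (kf:ℝ) * k₀ * ∫ u in (0:ℝ)..s, u := by
        rw [← intervalIntegral.integral_const_mul]
      rw [this, integral_id]
      ring
    have hΨeq : ‖Ψ s‖ = ‖∫ u in (0:ℝ)..s, D u‖ := by rw [hFTC, hΨ0, sub_zero]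
    rw [hΨeq]
    rw [hval] at hnormle
    calc ‖∫ u in (0:ℝ)..s, D u‖ ≤ |(kf:ℝ) * k₀ * s ^ 2| := hnormle
      _ = kf * k₀ * s ^ 2 := abs_of_nonneg (by positivity)
  have hωne : ω ≠ 0 := ne_of_gt hω
  have ht0 : (0:ℝ) ≤ t := ht.1
  have htτ : Set.Icc (0:ℝ) t ⊆ Set.Icc 0 τ := Set.Icc_subset_Icc le_rfl ht.2
  have huIcct : Set.uIcc (0:ℝ) t = Set.Icc 0 t := Set.uIcc_of_le ht0
  -- the integrand of h(y(t))
  set I : ℝ → ℝ := fun s => deriv R₁ (ω * s) * fderiv ℝ h (y s) (f₁ (y s))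
    + deriv R₂ (ω * s) * fderiv ℝ h (y s) (f₂ (y s)) with hIdef
  have hIcont : ContinuousOn I (Set.Icc 0 t) := by
    have hy' : ContinuousOn y (Set.Icc 0 t) := hycont.mono htτ
    have hg₁ : ContinuousOn (fun s => fderiv ℝ h (y s) (f₁ (y s))) (Set.Icc 0 t) :=
      ContinuousOn.clm_apply (hDh1.continuous.comp_continuousOn hy')
        (hf₁.continuous.comp_continuousOn hy')
    have hg₂ : ContinuousOn (fun s => fderiv ℝ h (y s) (f₂ (y s))) (Set.Icc 0 t) :=
      ContinuousOn.clm_apply (hDh1.continuous.comp_continuousOn hy')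
        (hf₂.continuous.comp_continuousOn hy')
    exact (((hrc₁.comp (continuous_const.mul continuous_id)).continuousOn).mul hg₁).add
      (((hrc₂.comp (continuous_const.mul continuous_id)).continuousOn).mul hg₂)
  have hIint : IntervalIntegrable I volume 0 t := (huIcct ▸ hIcont).intervalIntegrable
  have hFTCh : h (y t) - h x₀ = ∫ s in (0:ℝ)..t, I s := by
    have hder : ∀ u ∈ Set.uIcc (0:ℝ) t, HasDerivAt (fun v => h (y v)) (I u) u := by
      intro u hu
      rw [huIcct] at hu
      have hu' : u ∈ Set.Icc (0:ℝ) τ := htτ hu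
      have hyder := hyd u hu'
      have hhder : HasFDerivAt h (fderiv ℝ h (y u)) (y u) := (hhd (y u)).hasFDerivAt
      have hcomp := hhder.comp_hasDerivAt u hyder
      have heq : fderiv ℝ h (y u) (deriv R₁ (ω * u) • f₁ (y u) + deriv R₂ (ω * u) • f₂ (y u))
          = I u := by
        rw [map_add, _root_.map_smul, _root_.map_smul, hIdef]
        simp [smul_eq_mul]
      rwa [heq] at hcomp
    rw [intervalIntegral.integral_eq_sub_of_hasDerivAt hder hIint, hy0]
  -- the quadratic form and the area primitive
  set GG : ℝ → ℝ := fun σ => a11 * (R₁ σ * R₁ σ) + (a12 + a21) * (R₁ σ * R₂ σ)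
    + a22 * (R₂ σ * R₂ σ) with hGGdef
  have hGGder : ∀ σ, HasDerivAt GG
      (a11 * (deriv R₁ σ * R₁ σ + R₁ σ * deriv R₁ σ)
        + (a12 + a21) * (deriv R₁ σ * R₂ σ + R₁ σ * deriv R₂ σ)
        + a22 * (deriv R₂ σ * R₂ σ + R₂ σ * deriv R₂ σ)) σ := by
    intro σ
    have h₁ : HasDerivAt R₁ (deriv R₁ σ) σ := (hdrop.diff₁ σ).hasDerivAt
    have h₂ : HasDerivAt R₂ (deriv R₂ σ) σ := (hdrop.diff₂ σ).hasDerivAt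
    exact (((h₁.mul h₁).const_mul a11).add ((h₁.mul h₂).const_mul (a12 + a21))).add
      ((h₂.mul h₂).const_mul a22)
  have hAreaDer : ∀ σ : ℝ, HasDerivAt (fun b => sweptArea R₁ R₂ 0 b)
      (1 / 2 * (deriv R₂ σ * R₁ σ - deriv R₁ σ * R₂ σ)) σ := by
    intro σ
    have hq : Continuous fun s => deriv R₂ s * R₁ s - deriv R₁ s * R₂ s :=
      (hrc₂.mul hdrop.diff₁.continuous).sub (hrc₁.mul hdrop.diff₂.continuous)
    have hint := intervalIntegral.integral_hasDerivAt_right (hq.intervalIntegrable 0 σ)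
      (hq.stronglyMeasurableAtFilter volume (nhds σ)) hq.continuousAt
    have := hint.const_mul (1 / 2 : ℝ)
    simpa [sweptArea, mul_comm] using this
  set Φ : ℝ → ℝ := fun s => (2 * ω ^ 2)⁻¹ * GG (ω * s)
    + (p (lieBracket f₁ f₂ x₀) / ω ^ 2) * sweptArea R₁ R₂ 0 (ω * s) with hΦdef
  set main : ℝ → ℝ := fun s => ω⁻¹ * (a11 * (deriv R₁ (ω * s) * R₁ (ω * s))
    + a12 * (deriv R₁ (ω * s) * R₂ (ω * s)) + a21 * (deriv R₂ (ω * s) * R₁ (ω * s))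
    + a22 * (deriv R₂ (ω * s) * R₂ (ω * s))) with hmaindef
  have hΦder : ∀ s, HasDerivAt Φ (main s) s := by
    intro s
    have h0 : HasDerivAt (fun u : ℝ => ω * u) ω s := by
      simpa using (hasDerivAt_id s).const_mul ω
    have hG := ((hGGder (ω * s)).comp s h0).const_mul ((2 * ω ^ 2)⁻¹)
    have hA := ((hAreaDer (ω * s)).comp s h0).const_mul (p (lieBracket f₁ f₂ x₀) / ω ^ 2)
    have hsum := hG.add hA
    have hDeq : main s = (2 * ω ^ 2)⁻¹ * ((a11 * (deriv R₁ (ω * s) * R₁ (ω * s)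
          + R₁ (ω * s) * deriv R₁ (ω * s))
        + (a12 + a21) * (deriv R₁ (ω * s) * R₂ (ω * s) + R₁ (ω * s) * deriv R₂ (ω * s))
        + a22 * (deriv R₂ (ω * s) * R₂ (ω * s) + R₂ (ω * s) * deriv R₂ (ω * s))) * ω)
        + (p (lieBracket f₁ f₂ x₀) / ω ^ 2)
          * (1 / 2 * (deriv R₂ (ω * s) * R₁ (ω * s) - deriv R₁ (ω * s) * R₂ (ω * s)) * ω) := by
      simp only [hmaindef]
      rw [← hbeta]
      field_simp
      ring
    rw [hDeq]
    exact hsum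
  have hΦ0 : Φ 0 = 0 := by
    simp [hΦdef, hGGdef, hdrop.init₁, hdrop.init₂, sweptArea_zero]
  have hcm : Continuous main := by
    have hc1 : Continuous fun s => deriv R₁ (ω * s) :=
      hrc₁.comp (continuous_const.mul continuous_id)
    have hc2 : Continuous fun s => deriv R₂ (ω * s) :=
      hrc₂.comp (continuous_const.mul continuous_id)
    have hc3 : Continuous fun s => R₁ (ω * s) :=
      hdrop.diff₁.continuous.comp (continuous_const.mul continuous_id)
    have hc4 : Continuous fun s => R₂ (ω * s) :=
      hdrop.diff₂.continuous.comp (continuous_const.mul continuous_id)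
    exact continuous_const.mul ((((continuous_const.mul (hc1.mul hc3)).add
      (continuous_const.mul (hc1.mul hc4))).add (continuous_const.mul (hc2.mul hc3))).add
      (continuous_const.mul (hc2.mul hc4)))
  have hmint : IntervalIntegrable main volume 0 t := hcm.intervalIntegrable 0 t
  have hIntMain : (∫ s in (0:ℝ)..t, main s) = Φ t := by
    have heq := intervalIntegral.integral_eq_sub_of_hasDerivAt (f := Φ) (f' := main)
      (fun u _ => hΦder u) hmint
    rw [heq, hΦ0, sub_zero]
  -- pointwise error bound
  have hdbound : ∀ s ∈ Set.Icc (0:ℝ) t, |I s - main s| ≤ Kerr * s ^ 2 := by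
    intro s hs
    have hsτ : s ∈ Set.Icc (0:ℝ) τ := htτ hs
    have hym := hymem s hsτ
    have hyb := hybound s hsτ
    have hΨb := hΨbound s hsτ
    have hyb2 : ‖y s - x₀‖ ^ 2 ≤ (k₀ * s) ^ 2 := by
      apply pow_le_pow_left₀ (norm_nonneg _) hyb
    have hd₁ : |fderiv ℝ h (y s) (f₁ (y s)) - ω⁻¹ * (a11 * R₁ (ω * s) + a12 * R₂ (ω * s))|
        ≤ (Kg * k₀ ^ 2 + ‖A₁‖ * (kf * k₀)) * s ^ 2 := by
      have hq := hgquad₁ (y s) hym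
      have hAψ : A₁ (Ψ s) = A₁ (y s - x₀) - ω⁻¹ * (a11 * R₁ (ω * s) + a12 * R₂ (ω * s)) := by
        simp only [hΨdef, map_sub, map_add, _root_.map_smul, smul_eq_mul]
        rw [ha11, ha12]
        ring
      have hAbd : |A₁ (Ψ s)| ≤ ‖A₁‖ * (kf * k₀ * s ^ 2) := by
        rw [← Real.norm_eq_abs]
        exact le_trans (A₁.le_opNorm _) (mul_le_mul_of_nonneg_left hΨb (norm_nonneg _))
      have decomp : fderiv ℝ h (y s) (f₁ (y s)) - ω⁻¹ * (a11 * R₁ (ω * s) + a12 * R₂ (ω * s))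
          = (fderiv ℝ h (y s) (f₁ (y s)) - A₁ (y s - x₀)) + A₁ (Ψ s) := by
        rw [hAψ]; ring
      rw [decomp]
      calc |(fderiv ℝ h (y s) (f₁ (y s)) - A₁ (y s - x₀)) + A₁ (Ψ s)|
          ≤ |fderiv ℝ h (y s) (f₁ (y s)) - A₁ (y s - x₀)| + |A₁ (Ψ s)| := abs_add_le _ _
        _ ≤ Kg * ‖y s - x₀‖ ^ 2 + ‖A₁‖ * (kf * k₀ * s ^ 2) := add_le_add hq hAbd
        _ ≤ Kg * (k₀ * s) ^ 2 + ‖A₁‖ * (kf * k₀ * s ^ 2) :=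
            add_le_add (mul_le_mul_of_nonneg_left hyb2 hKg0) le_rfl
        _ = (Kg * k₀ ^ 2 + ‖A₁‖ * (kf * k₀)) * s ^ 2 := by ring
    have hd₂ : |fderiv ℝ h (y s) (f₂ (y s)) - ω⁻¹ * (a21 * R₁ (ω * s) + a22 * R₂ (ω * s))|
        ≤ (Kg * k₀ ^ 2 + ‖A₂‖ * (kf * k₀)) * s ^ 2 := by
      have hq := hgquad₂ (y s) hym
      have hAψ : A₂ (Ψ s) = A₂ (y s - x₀) - ω⁻¹ * (a21 * R₁ (ω * s) + a22 * R₂ (ω * s)) := by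
        simp only [hΨdef, map_sub, map_add, _root_.map_smul, smul_eq_mul]
        rw [ha21, ha22]
        ring
      have hAbd : |A₂ (Ψ s)| ≤ ‖A₂‖ * (kf * k₀ * s ^ 2) := by
        rw [← Real.norm_eq_abs]
        exact le_trans (A₂.le_opNorm _) (mul_le_mul_of_nonneg_left hΨb (norm_nonneg _))
      have decomp : fderiv ℝ h (y s) (f₂ (y s)) - ω⁻¹ * (a21 * R₁ (ω * s) + a22 * R₂ (ω * s))
          = (fderiv ℝ h (y s) (f₂ (y s)) - A₂ (y s - x₀)) + A₂ (Ψ s) := by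
        rw [hAψ]; ring
      rw [decomp]
      calc |(fderiv ℝ h (y s) (f₂ (y s)) - A₂ (y s - x₀)) + A₂ (Ψ s)|
          ≤ |fderiv ℝ h (y s) (f₂ (y s)) - A₂ (y s - x₀)| + |A₂ (Ψ s)| := abs_add_le _ _
        _ ≤ Kg * ‖y s - x₀‖ ^ 2 + ‖A₂‖ * (kf * k₀ * s ^ 2) := add_le_add hq hAbd
        _ ≤ Kg * (k₀ * s) ^ 2 + ‖A₂‖ * (kf * k₀ * s ^ 2) :=
            add_le_add (mul_le_mul_of_nonneg_left hyb2 hKg0) le_rfl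
        _ = (Kg * k₀ ^ 2 + ‖A₂‖ * (kf * k₀)) * s ^ 2 := by ring
    have hIsplit : I s - main s
        = deriv R₁ (ω * s)
            * (fderiv ℝ h (y s) (f₁ (y s)) - ω⁻¹ * (a11 * R₁ (ω * s) + a12 * R₂ (ω * s)))
          + deriv R₂ (ω * s)
            * (fderiv ℝ h (y s) (f₂ (y s)) - ω⁻¹ * (a21 * R₁ (ω * s) + a22 * R₂ (ω * s))) := by
      simp only [hIdef, hmaindef]
      ring
    rw [hIsplit]
    have hb₁nn : (0:ℝ) ≤ (Kg * k₀ ^ 2 + ‖A₁‖ * (kf * k₀)) * s ^ 2 := by positivity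
    have hb₂nn : (0:ℝ) ≤ (Kg * k₀ ^ 2 + ‖A₂‖ * (kf * k₀)) * s ^ 2 := by positivity
    calc |deriv R₁ (ω * s)
            * (fderiv ℝ h (y s) (f₁ (y s)) - ω⁻¹ * (a11 * R₁ (ω * s) + a12 * R₂ (ω * s)))
          + deriv R₂ (ω * s)
            * (fderiv ℝ h (y s) (f₂ (y s)) - ω⁻¹ * (a21 * R₁ (ω * s) + a22 * R₂ (ω * s)))|
        ≤ |deriv R₁ (ω * s)|
            * |fderiv ℝ h (y s) (f₁ (y s)) - ω⁻¹ * (a11 * R₁ (ω * s) + a12 * R₂ (ω * s))|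
          + |deriv R₂ (ω * s)|
            * |fderiv ℝ h (y s) (f₂ (y s)) - ω⁻¹ * (a21 * R₁ (ω * s) + a22 * R₂ (ω * s))| := by
          refine le_trans (abs_add_le _ _) ?_
          rw [abs_mul, abs_mul]
      _ ≤ 1 * ((Kg * k₀ ^ 2 + ‖A₁‖ * (kf * k₀)) * s ^ 2)
          + 1 * ((Kg * k₀ ^ 2 + ‖A₂‖ * (kf * k₀)) * s ^ 2) :=
          add_le_add (mul_le_mul (hr₁le _) hd₁ (abs_nonneg _) zero_le_one)
            (mul_le_mul (hr₂le _) hd₂ (abs_nonneg _) zero_le_one)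
      _ = Kerr * s ^ 2 := by rw [hKerrdef, hKAdef]; ring
  -- integral error bound
  have hIntErr : (∫ s in (0:ℝ)..t, (I s - main s)) ≤ Kerr * t ^ 3 / 3 := by
    have hint1 : IntervalIntegrable (fun s => I s - main s) volume 0 t := hIint.sub hmint
    have hle : (∫ s in (0:ℝ)..t, (I s - main s)) ≤ ∫ s in (0:ℝ)..t, Kerr * s ^ 2 :=
      intervalIntegral.integral_mono_on ht0 hint1
        ((continuous_const.mul (continuous_pow 2)).intervalIntegrable 0 t)
        (fun s hs => le_trans (le_abs_self _) (hdbound s hs))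
    have hval : (∫ s in (0:ℝ)..t, Kerr * s ^ 2) = Kerr * t ^ 3 / 3 := by
      rw [intervalIntegral.integral_const_mul, integral_pow]
      ring
    rw [hval] at hle
    exact hle
  -- the area lower bound
  have hωtmem : ω * t ∈ Set.Icc (0:ℝ) τ₀ := by
    constructor
    · positivity
    · calc ω * t ≤ ω * τ := mul_le_mul_of_nonneg_left ht.2 hω.le
        _ = τ₀ := hωτ
  have hAcube : (ω * t) ^ 3 / 6 ≤ CR * sweptArea R₁ R₂ 0 (ω * t) :=
    hdrop.cube_le_area hexc hωtmem
  have hArea0 : 0 ≤ sweptArea R₁ R₂ 0 (ω * t) := hdrop.area_nonneg hωtmem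
  have hGGle : GG (ω * t) ≤ 0 := by
    have h5' := hS (ω * t)
    rw [hGform (ω * t)] at h5'
    simpa [hGGdef] using h5'
  -- combine
  have hsubint := intervalIntegral.integral_sub hIint hmint
  have hkey : h (y t) - h x₀ = Φ t + ∫ s in (0:ℝ)..t, (I s - main s) := by
    rw [hFTCh, hsubint, hIntMain]
    ring
  have hΦle : Φ t ≤ (p (lieBracket f₁ f₂ x₀) / ω ^ 2) * sweptArea R₁ R₂ 0 (ω * t) := by
    simp only [hΦdef]
    have h1 : (2 * ω ^ 2)⁻¹ * GG (ω * t) ≤ 0 :=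
      mul_nonpos_of_nonneg_of_nonpos (by positivity) hGGle
    linarith
  have hstep : Kerr * t ^ 3 / 3
      ≤ (-(p (lieBracket f₁ f₂ x₀)) / 2) * (1 / ω ^ 2) * sweptArea R₁ R₂ 0 (ω * t) := by
    have hA2 : ω ^ 3 * t ^ 3 / (6 * CR) ≤ sweptArea R₁ R₂ 0 (ω * t) := by
      rw [div_le_iff₀ (by positivity)]
      have hexp : (ω * t) ^ 3 = ω ^ 3 * t ^ 3 := by ring
      rw [hexp] at hAcube
      linarith
    have hβnn : (0:ℝ) ≤ -(p (lieBracket f₁ f₂ x₀)) := by linarith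
    have hb2 : (0:ℝ) ≤ (-(p (lieBracket f₁ f₂ x₀)) / 2) * (1 / ω ^ 2) := by
      apply mul_nonneg (by linarith) (by positivity)
    have hmul : (-(p (lieBracket f₁ f₂ x₀)) / 2) * (1 / ω ^ 2) * (ω ^ 3 * t ^ 3 / (6 * CR))
        = (-(p (lieBracket f₁ f₂ x₀))) * ω * t ^ 3 / (12 * CR) := by
      field_simp
      ring
    have hωβ : Kerr * (4 * CR) ≤ (-(p (lieBracket f₁ f₂ x₀))) * ω := by
      have hrw : (-(p (lieBracket f₁ f₂ x₀))) * ω = ((-(p (lieBracket f₁ f₂ x₀))) * τ₀) / τ := by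
        rw [hωdef]; ring
      rw [hrw, le_div_iff₀ hτ0]
      calc Kerr * (4 * CR) * τ = Kerr * τ * (4 * CR) := by ring
        _ ≤ (-p (lieBracket f₁ f₂ x₀)) * τ₀ := hτK
        _ = -(p (lieBracket f₁ f₂ x₀)) * τ₀ := by ring
    calc Kerr * t ^ 3 / 3 ≤ (-(p (lieBracket f₁ f₂ x₀))) * ω * t ^ 3 / (12 * CR) := by
          rw [div_le_div_iff₀ (by norm_num) (by linarith : (0:ℝ) < 12 * CR)]
          have hm := mul_le_mul_of_nonneg_right hωβ (pow_nonneg ht0 3)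
          have e1 : Kerr * t ^ 3 * (12 * CR) = 3 * (Kerr * (4 * CR) * t ^ 3) := by ring
          have e2 : -(p (lieBracket f₁ f₂ x₀)) * ω * t ^ 3 * 3
              = 3 * (-(p (lieBracket f₁ f₂ x₀)) * ω * t ^ 3) := by ring
          linarith [hm]
      _ = (-(p (lieBracket f₁ f₂ x₀)) / 2) * (1 / ω ^ 2) * (ω ^ 3 * t ^ 3 / (6 * CR)) := hmul.symm
      _ ≤ (-(p (lieBracket f₁ f₂ x₀)) / 2) * (1 / ω ^ 2) * sweptArea R₁ R₂ 0 (ω * t) :=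
          mul_le_mul_of_nonneg_left hA2 hb2
  have hring : (p (lieBracket f₁ f₂ x₀) / ω ^ 2) * sweptArea R₁ R₂ 0 (ω * t)
      + (-(p (lieBracket f₁ f₂ x₀)) / 2) * (1 / ω ^ 2) * sweptArea R₁ R₂ 0 (ω * t)
      = 1 / 2 * p (lieBracket f₁ f₂ x₀) * (1 / ω ^ 2) * sweptArea R₁ R₂ 0 (ω * t) := by
    ring
  calc h (y t) - h x₀ = Φ t + ∫ s in (0:ℝ)..t, (I s - main s) := hkey
    _ ≤ (p (lieBracket f₁ f₂ x₀) / ω ^ 2) * sweptArea R₁ R₂ 0 (ω * t) + Kerr * t ^ 3 / 3 :=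
        add_le_add hΦle hIntErr
    _ ≤ (p (lieBracket f₁ f₂ x₀) / ω ^ 2) * sweptArea R₁ R₂ 0 (ω * t)
        + (-(p (lieBracket f₁ f₂ x₀)) / 2) * (1 / ω ^ 2) * sweptArea R₁ R₂ 0 (ω * t) :=
        add_le_add le_rfl hstep
    _ = 1 / 2 * p (lieBracket f₁ f₂ x₀) * (1 / ω ^ 2) * sweptArea R₁ R₂ 0 (ω * t) := by ring

end
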